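/- Let A be a 2m-th order n-dimensional Hermitian tensor which is CPS and a strict LLK tensor (all diagonal entries positive and (a_{i...iī...ī} − r_i^j(A)) a_{j...jj̄...j̄} > r_j(A)|a_{ij...jj̄...j̄}| for all i ≠ j). Then every Ĥ-eigenvalue of A is positive; consequently A is Hermitian positive definite. -/

import Mathlib

open Complex Finset

/-- The conjugate polynomial associated to a `2m`-th order `n`-dimensional complex tensor. -/
noncomputable def fpoly {n m : ℕ} (A : (Fin m → Fin n) → (Fin m → Fin n) → ℂ)
    (x : Fin n → ℂ) : ℂ :=
  ∑ i : Fin m → Fin n, ∑ j : Fin m → Fin n,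
    A i j * (∏ k, x (i k)) * ∏ k, (starRingEnd ℂ) (x (j k))

/-- Hermitian condition for a `2m`-th order tensor. -/
def IsHermitianTensor {n m : ℕ} (A : (Fin m → Fin n) → (Fin m → Fin n) → ℂ) : Prop :=
  ∀ i j, (starRingEnd ℂ) (A i j) = A j i

/-- Conjugate partial-symmetric tensor. -/
def IsCPS {n m : ℕ} (A : (Fin m → Fin n) → (Fin m → Fin n) → ℂ) : Prop :=
  IsHermitianTensor A ∧
    ∀ (i j : Fin m → Fin n) (σ τ : Equiv.Perm (Fin m)), A (i ∘ σ) (j ∘ τ) = A i j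

/-- `λ` is an `Ĥ`-eigenvalue of the `2(m+1)`-th order tensor `A` with eigenvector `x`. -/
noncomputable def IsHhatEigenpair {n m : ℕ}
    (A : (Fin (m+1) → Fin n) → (Fin (m+1) → Fin n) → ℂ)
    (lam : ℂ) (x : Fin n → ℂ) : Prop :=
  x ≠ 0 ∧ ∀ p : Fin n,
    (∑ i : Fin m → Fin n, ∑ j : Fin (m+1) → Fin n,
      A (Fin.cons p i) j * (∏ k, x (i k)) * ∏ k, (starRingEnd ℂ) (x (j k)))
    = lam * (starRingEnd ℂ) (x p) * ((‖x p‖ : ℂ)) ^ (2*m)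

/-- Diagonal entry `a_{p...p p̄...p̄}`. -/
noncomputable def diagEntry {n m : ℕ}
    (A : (Fin m → Fin n) → (Fin m → Fin n) → ℂ) (p : Fin n) : ℂ :=
  A (fun _ => p) (fun _ => p)

/-- `r_p(A)`: sum of moduli of the off-diagonal entries of the `p`-th slice. -/
noncomputable def rOff {n m : ℕ}
    (A : (Fin (m+1) → Fin n) → (Fin (m+1) → Fin n) → ℂ) (p : Fin n) : ℝ :=
  ∑ i : Fin m → Fin n, ∑ j : Fin (m+1) → Fin n,
    if i = (fun _ => p) ∧ j = (fun _ => p) then 0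
    else ‖A (Fin.cons p i) j‖

/-- `r'_p(A)`: sum over tuples in which no index equals `p`. -/
noncomputable def rPrime {n m : ℕ}
    (A : (Fin (m+1) → Fin n) → (Fin (m+1) → Fin n) → ℂ) (p : Fin n) : ℝ :=
  ∑ i : Fin m → Fin n, ∑ j : Fin (m+1) → Fin n,
    if (∀ k, i k ≠ p) ∧ (∀ k, j k ≠ p) then ‖A (Fin.cons p i) j‖ else 0

/-- `r̂_p(A) = r_p(A) - r'_p(A)`. -/
noncomputable def rHat {n m : ℕ}
    (A : (Fin (m+1) → Fin n) → (Fin (m+1) → Fin n) → ℂ) (p : Fin n) : ℝ :=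
  rOff A p - rPrime A p

/-- Entry `a_{p q...q q̄...q̄}`. -/
noncomputable def aSlice {n m : ℕ}
    (A : (Fin (m+1) → Fin n) → (Fin (m+1) → Fin n) → ℂ) (p q : Fin n) : ℂ :=
  A (Fin.cons p (fun _ => q)) (fun _ => q)

/-- `r_p^q(A) = r_p(A) - |a_{p q...q q̄...q̄}|`. -/
noncomputable def rOffSub {n m : ℕ}
    (A : (Fin (m+1) → Fin n) → (Fin (m+1) → Fin n) → ℂ) (p q : Fin n) : ℝ :=
  rOff A p - ‖aSlice A p q‖

/-- Hermitian positive definiteness. -/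
def HermitianPD {n m : ℕ} (A : (Fin m → Fin n) → (Fin m → Fin n) → ℂ) : Prop :=
  ∀ x : Fin n → ℂ, x ≠ 0 → ∃ r : ℝ, fpoly A x = r ∧ 0 < r

/-- Hermitian positive semidefiniteness. -/
def HermitianPSD {n m : ℕ} (A : (Fin m → Fin n) → (Fin m → Fin n) → ℂ) : Prop :=
  ∀ x : Fin n → ℂ, ∃ r : ℝ, fpoly A x = r ∧ 0 ≤ r

noncomputable def Fop {n m : ℕ} (A : (Fin (m+1) → Fin n) → (Fin (m+1) → Fin n) → ℂ)
    (x : Fin n → ℂ) (p : Fin n) : ℂ :=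
  ∑ i : Fin m → Fin n, ∑ j : Fin (m+1) → Fin n,
    A (Fin.cons p i) j * (∏ k, x (i k)) * ∏ k, (starRingEnd ℂ) (x (j k))

lemma fpoly_decomp {n m : ℕ} (A : (Fin (m+1) → Fin n) → (Fin (m+1) → Fin n) → ℂ)
    (x : Fin n → ℂ) : fpoly A x = ∑ p, x p * Fop A x p := by
  rw [fpoly, ← (Fin.consEquiv (fun _ => Fin n)).sum_comp]
  rw [Fintype.sum_prod_type]
  refine Finset.sum_congr rfl fun p _ => ?_
  rw [Fop, Finset.mul_sum]
  refine Finset.sum_congr rfl fun i _ => ?_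
  rw [Finset.mul_sum]
  refine Finset.sum_congr rfl fun j _ => ?_
  rw [show ((Fin.consEquiv fun _ => Fin n) (p, i)) = Fin.cons p i from rfl,
    Fin.prod_univ_succ]
  simp only [Fin.cons_zero, Fin.cons_succ]
  ring

lemma conj_fpoly {n M : ℕ} (A : (Fin M → Fin n) → (Fin M → Fin n) → ℂ)
    (hA : IsHermitianTensor A) (x : Fin n → ℂ) :
    (starRingEnd ℂ) (fpoly A x) = fpoly A x := by
  rw [fpoly, map_sum]
  rw [Finset.sum_comm]
  refine Finset.sum_congr rfl fun i _ => ?_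
  rw [map_sum]
  refine Finset.sum_congr rfl fun j _ => ?_
  rw [map_mul, map_mul, map_prod, map_prod, hA]
  simp only [Complex.conj_conj]
  ring

lemma fpoly_im_zero {n M : ℕ} (A : (Fin M → Fin n) → (Fin M → Fin n) → ℂ)
    (hA : IsHermitianTensor A) (x : Fin n → ℂ) : (fpoly A x).im = 0 := by
  have h := conj_fpoly A hA x
  have := congrArg Complex.im h
  simp only [Complex.conj_im] at this
  linarith

/-- the positive real `∑ |x p|^(2(m+1))` -/
noncomputable def normPow {n : ℕ} (M : ℕ) (x : Fin n → ℂ) : ℝ :=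
  ∑ p, (‖x p‖) ^ M

lemma normPow_pos {n M : ℕ} (x : Fin n → ℂ) (hx : x ≠ 0) : 0 < normPow M x := by
  obtain ⟨p, hp⟩ := Function.ne_iff.mp hx
  refine Finset.sum_pos' (fun q _ => by positivity) ⟨p, Finset.mem_univ p, ?_⟩
  have : ‖x p‖ ≠ 0 := by simpa using hp
  positivity

lemma eigen_fpoly {n m : ℕ} (A : (Fin (m+1) → Fin n) → (Fin (m+1) → Fin n) → ℂ)
    (lam : ℂ) (x : Fin n → ℂ) (h : IsHhatEigenpair A lam x) :
    fpoly A x = lam * (normPow (2*m+2) x : ℝ) := by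
  rw [fpoly_decomp]
  have he := h.2
  calc ∑ p, x p * Fop A x p = ∑ p, lam * ((‖x p‖ : ℂ)) ^ (2*m+2) := by
        refine Finset.sum_congr rfl fun p _ => ?_
        rw [show Fop A x p = lam * (starRingEnd ℂ) (x p) * ((‖x p‖ : ℂ)) ^ (2*m) from he p]
        have : x p * (starRingEnd ℂ) (x p) = ((‖x p‖ : ℂ)) ^ 2 := by
          rw [Complex.mul_conj]
          norm_cast
          rw [Complex.sq_norm]
        calc x p * (lam * (starRingEnd ℂ) (x p) * ((‖x p‖) : ℂ) ^ (2*m))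
            = lam * (x p * (starRingEnd ℂ) (x p) * ((‖x p‖) : ℂ) ^ (2*m)) := by ring
          _ = lam * (((‖x p‖) : ℂ) ^ 2 * ((‖x p‖) : ℂ) ^ (2*m)) := by rw [this]
          _ = lam * ((‖x p‖ : ℂ)) ^ (2*m+2) := by ring
    _ = lam * (normPow (2*m+2) x : ℝ) := by
        rw [← Finset.mul_sum, normPow]
        push_cast
        ring

lemma eigen_im_zero {n m : ℕ} (A : (Fin (m+1) → Fin n) → (Fin (m+1) → Fin n) → ℂ)
    (hA : IsHermitianTensor A) (lam : ℂ) (x : Fin n → ℂ)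
    (h : IsHhatEigenpair A lam x) : lam.im = 0 := by
  have h1 := eigen_fpoly A lam x h
  have h2 := fpoly_im_zero A hA x
  rw [h1] at h2
  have hS := normPow_pos (M := 2*m+2) x h.1
  simp only [Complex.mul_im, Complex.ofReal_re, Complex.ofReal_im, mul_zero, add_zero, zero_add] at h2
  rcases mul_eq_zero.mp h2 with h | h
  · exact h
  · exact absurd h (ne_of_gt hS)

lemma cons_self {n m : ℕ} (r : Fin n) :
    (Fin.cons r (fun _ => r) : Fin (m+1) → Fin n) = fun _ => r := by
  funext k
  exact Fin.cases rfl (fun _ => rfl) k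

lemma eigen_offdiag_bound {n m : ℕ} (A : (Fin (m+1) → Fin n) → (Fin (m+1) → Fin n) → ℂ)
    (c : ℝ) (x : Fin n → ℂ) (r : Fin n)
    (he : Fop A x r = (c:ℂ) * (starRingEnd ℂ) (x r) * ((‖x r‖ : ℂ)) ^ (2*m)) :
    ((diagEntry A r).re - c) * (‖x r‖)^(2*m+1) ≤
    ∑ z ∈ (Finset.univ ×ˢ Finset.univ).erase
        ((fun _ => r : Fin m → Fin n), (fun _ => r : Fin (m+1) → Fin n)),
      ‖A (Fin.cons r z.1) z.2‖ *
        ((∏ k, ‖x (z.1 k)‖) * ∏ k, ‖x (z.2 k)‖) := by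
  classical
  set d : (Fin m → Fin n) × (Fin (m+1) → Fin n) := (fun _ => r, fun _ => r) with hd
  set T : (Fin m → Fin n) × (Fin (m+1) → Fin n) → ℂ := fun z =>
    A (Fin.cons r z.1) z.2 * (∏ k, x (z.1 k)) * ∏ k, (starRingEnd ℂ) (x (z.2 k)) with hT
  have hsum : Fop A x r = ∑ z ∈ Finset.univ ×ˢ Finset.univ, T z := by
    rw [Fop, Finset.sum_product]
  have hdmem : d ∈ (Finset.univ ×ˢ Finset.univ :
      Finset ((Fin m → Fin n) × (Fin (m+1) → Fin n))) := by simp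
  have hsplit : Fop A x r = T d + ∑ z ∈ (Finset.univ ×ˢ Finset.univ).erase d, T z := by
    rw [hsum, Finset.add_sum_erase _ _ hdmem]
  have hmulconj : x r * (starRingEnd ℂ) (x r) = ((‖x r‖ : ℂ)) ^ 2 := by
    rw [Complex.mul_conj]; norm_cast; rw [Complex.sq_norm]
  have hTd : T d = diagEntry A r * ((‖x r‖ : ℂ)) ^ (2*m) * (starRingEnd ℂ) (x r) := by
    simp only [hT, hd]
    rw [cons_self]
    rw [Finset.prod_const, Finset.prod_const, Finset.card_univ, Finset.card_univ,
      Fintype.card_fin, Fintype.card_fin]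
    rw [diagEntry]
    have : (x r) ^ m * ((starRingEnd ℂ) (x r)) ^ (m+1)
        = ((‖x r‖ : ℂ)) ^ (2*m) * (starRingEnd ℂ) (x r) := by
      have h2 : (x r * (starRingEnd ℂ) (x r)) ^ m = (((‖x r‖ : ℂ)) ^ 2) ^ m := by
        rw [hmulconj]
      calc (x r) ^ m * ((starRingEnd ℂ) (x r)) ^ (m+1)
          = (x r * (starRingEnd ℂ) (x r)) ^ m * (starRingEnd ℂ) (x r) := by ring
        _ = (((‖x r‖ : ℂ)) ^ 2) ^ m * (starRingEnd ℂ) (x r) := by rw [h2]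
        _ = ((‖x r‖ : ℂ)) ^ (2*m) * (starRingEnd ℂ) (x r) := by
            rw [← pow_mul, mul_comm 2 m, mul_comm m 2]
    rw [mul_assoc, this, ← mul_assoc]
  have hoff : ∑ z ∈ (Finset.univ ×ˢ Finset.univ).erase d, T z
      = ((c:ℂ) - diagEntry A r) * ((‖x r‖ : ℂ)) ^ (2*m) * (starRingEnd ℂ) (x r) := by
    have := hsplit
    rw [he] at this
    rw [hTd] at this
    linear_combination -this
  have habs : ((diagEntry A r).re - c) * (‖x r‖)^(2*m+1)
      ≤ ‖∑ z ∈ (Finset.univ ×ˢ Finset.univ).erase d, T z‖ := by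
    rw [hoff]
    rw [norm_mul, norm_mul, Complex.norm_conj]
    rw [norm_pow, Complex.norm_real, norm_norm]
    have h1 : (diagEntry A r).re - c ≤ ‖(c:ℂ) - diagEntry A r‖ := by
      rw [show (c:ℂ) - diagEntry A r = -(diagEntry A r - (c:ℂ)) by ring, norm_neg]
      calc (diagEntry A r).re - c = (diagEntry A r - (c:ℂ)).re := by simp
        _ ≤ ‖diagEntry A r - (c:ℂ)‖ := Complex.re_le_norm _
    calc ((diagEntry A r).re - c) * (‖x r‖)^(2*m+1)
        = ((diagEntry A r).re - c) * ((‖x r‖)^(2*m) * ‖x r‖) := by ring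
      _ ≤ ‖(c:ℂ) - diagEntry A r‖ * ((‖x r‖)^(2*m) * ‖x r‖) := by
          apply mul_le_mul_of_nonneg_right h1; positivity
      _ = ‖(c:ℂ) - diagEntry A r‖ * ‖x r‖ ^ (2*m) * ‖x r‖ := by ring
  refine habs.trans ((norm_sum_le _ _).trans (le_of_eq (Finset.sum_congr rfl fun z _ => ?_)))
  simp only [hT]
  rw [norm_mul, norm_mul, norm_prod, norm_prod]
  simp only [Complex.norm_conj]
  ring

lemma prod_abs_le {n M : ℕ} (x : Fin n → ℂ) (B : ℝ) (hB : ∀ k, ‖x k‖ ≤ B)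
    (i : Fin M → Fin n) : ∏ k, ‖x (i k)‖ ≤ B ^ M := by
  calc ∏ k, ‖x (i k)‖ ≤ ∏ _k : Fin M, B :=
        Finset.prod_le_prod (fun _ _ => norm_nonneg _) (fun k _ => hB _)
    _ = B ^ M := by rw [Finset.prod_const, Finset.card_univ, Fintype.card_fin]

lemma rOff_eq {n m : ℕ} (A : (Fin (m+1) → Fin n) → (Fin (m+1) → Fin n) → ℂ) (r : Fin n) :
    rOff A r = ∑ z ∈ (Finset.univ ×ˢ Finset.univ).erase
        ((fun _ => r : Fin m → Fin n), (fun _ => r : Fin (m+1) → Fin n)),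
      ‖A (Fin.cons r z.1) z.2‖ := by
  classical
  set d : (Fin m → Fin n) × (Fin (m+1) → Fin n) := (fun _ => r, fun _ => r) with hd
  have hdmem : d ∈ (Finset.univ ×ˢ Finset.univ :
      Finset ((Fin m → Fin n) × (Fin (m+1) → Fin n))) := by simp
  rw [rOff, ← Finset.sum_product']
  have hcond : ∀ z : (Fin m → Fin n) × (Fin (m+1) → Fin n),
      (if z.1 = (fun _ => r) ∧ z.2 = (fun _ => r) then (0:ℝ)
        else ‖A (Fin.cons r z.1) z.2‖)
      = (if z = d then 0 else ‖A (Fin.cons r z.1) z.2‖) := by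
    intro z
    congr 1
    simp [hd, Prod.ext_iff]
  rw [Finset.sum_congr rfl (fun z _ => hcond z)]
  rw [← Finset.add_sum_erase _ _ hdmem, if_pos rfl, zero_add]
  refine Finset.sum_congr rfl fun z hz => ?_
  rw [if_neg (Finset.ne_of_mem_erase hz)]

lemma no_nonpos_eigen {n m : ℕ} (A : (Fin (m+1) → Fin n) → (Fin (m+1) → Fin n) → ℂ)
    (hdiag : ∀ p : Fin n, 0 < (diagEntry A p).re)
    (hsllk : ∀ p q : Fin n, p ≠ q →
      rOff A q * ‖aSlice A p q‖
        < ((diagEntry A p).re - rOffSub A p q) * (diagEntry A q).re)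
    (c : ℝ) (x : Fin n → ℂ) (h : IsHhatEigenpair A (c:ℂ) x) (hc : c ≤ 0) : False := by
  classical
  obtain ⟨hx0, he⟩ := h
  obtain ⟨p0, hp0⟩ := Function.ne_iff.mp hx0
  have hp0' : x p0 ≠ 0 := by simpa using hp0
  obtain ⟨p, -, hp⟩ := Finset.exists_max_image Finset.univ (fun q => ‖x q‖)
    ⟨p0, Finset.mem_univ p0⟩
  have hxp : 0 < ‖x p‖ :=
    lt_of_lt_of_le (norm_pos_iff.mpr hp0') (hp p0 (Finset.mem_univ _))
  have hBp : ∀ k, ‖x k‖ ≤ ‖x p‖ := fun k => hp k (Finset.mem_univ _)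
  set s : ℝ := ‖x p‖ ^ (2*m+1) with hs
  have hspos : 0 < s := by positivity
  have h1 := eigen_offdiag_bound A c x p (he p)
  by_cases hall : ∀ q, q ≠ p → x q = 0
  · -- all off-diagonal terms vanish
    have hzero : ∀ z ∈ (Finset.univ ×ˢ Finset.univ).erase
        ((fun _ => p : Fin m → Fin n), (fun _ => p : Fin (m+1) → Fin n)),
        ‖A (Fin.cons p z.1) z.2‖ *
          ((∏ k, ‖x (z.1 k)‖) * ∏ k, ‖x (z.2 k)‖) = 0 := by
      intro z hz
      rw [Finset.mem_erase] at hz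
      have hne : z.1 ≠ (fun _ => p) ∨ z.2 ≠ (fun _ => p) := by
        by_contra hcon
        push_neg at hcon
        exact hz.1 (Prod.ext hcon.1 hcon.2)
      rcases hne with hne | hne
      · obtain ⟨k, hk⟩ := Function.ne_iff.mp hne
        have : ‖x (z.1 k)‖ = 0 := by
          rw [hall _ hk]; simp
        rw [Finset.prod_eq_zero (Finset.mem_univ k) this]
        ring
      · obtain ⟨k, hk⟩ := Function.ne_iff.mp hne
        have : ‖x (z.2 k)‖ = 0 := by
          rw [hall _ hk]; simp
        rw [Finset.prod_eq_zero (Finset.mem_univ k) this]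
        ring
    rw [Finset.sum_eq_zero hzero] at h1
    nlinarith [hdiag p, hspos]
  · push_neg at hall
    obtain ⟨q0, hq0ne, hq0⟩ := hall
    obtain ⟨q, hqmem, hq⟩ := Finset.exists_max_image (Finset.univ.erase p)
      (fun a => ‖x a‖) ⟨q0, Finset.mem_erase.mpr ⟨hq0ne, Finset.mem_univ _⟩⟩
    have hqp : q ≠ p := (Finset.mem_erase.mp hqmem).1
    have hxq : 0 < ‖x q‖ :=
      lt_of_lt_of_le (norm_pos_iff.mpr hq0)
        (hq q0 (Finset.mem_erase.mpr ⟨hq0ne, Finset.mem_univ _⟩))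
    set t : ℝ := ‖x q‖ ^ (2*m+1) with ht
    have htpos : 0 < t := by positivity
    have hts : t ≤ s := pow_le_pow_left₀ (norm_nonneg _) (hBp q) _
    -- refined bound at p
    set d : (Fin m → Fin n) × (Fin (m+1) → Fin n) := (fun _ => p, fun _ => p) with hd
    set e : (Fin m → Fin n) × (Fin (m+1) → Fin n) := (fun _ => q, fun _ => q) with hedef
    have hed : e ≠ d := by
      intro hcon
      have := congrArg (fun z => z.2 0) hcon
      simp only [hedef, hd] at this
      exact hqp this
    have hemem : e ∈ (Finset.univ ×ˢ Finset.univ).erase d :=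
      Finset.mem_erase.mpr ⟨hed, by simp⟩
    have hterm_e : ‖A (Fin.cons p e.1) e.2‖ *
        ((∏ k, ‖x (e.1 k)‖) * ∏ k, ‖x (e.2 k)‖)
        = ‖aSlice A p q‖ * t := by
      simp only [hedef]
      rw [Finset.prod_const, Finset.prod_const, Finset.card_univ, Finset.card_univ,
        Fintype.card_fin, Fintype.card_fin]
      rw [aSlice, ht]
      ring
    have hsum_split : ∑ z ∈ (Finset.univ ×ˢ Finset.univ).erase d,
        ‖A (Fin.cons p z.1) z.2‖ *
          ((∏ k, ‖x (z.1 k)‖) * ∏ k, ‖x (z.2 k)‖)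
        ≤ ‖aSlice A p q‖ * t + rOffSub A p q * s := by
      rw [← Finset.add_sum_erase _ _ hemem, hterm_e]
      have hrest : ∑ z ∈ ((Finset.univ ×ˢ Finset.univ).erase d).erase e,
          ‖A (Fin.cons p z.1) z.2‖ *
            ((∏ k, ‖x (z.1 k)‖) * ∏ k, ‖x (z.2 k)‖)
          ≤ ∑ z ∈ ((Finset.univ ×ˢ Finset.univ).erase d).erase e,
            ‖A (Fin.cons p z.1) z.2‖ * s := by
        refine Finset.sum_le_sum fun z _ => ?_
        refine mul_le_mul_of_nonneg_left ?_ (norm_nonneg _)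
        calc (∏ k, ‖x (z.1 k)‖) * ∏ k, ‖x (z.2 k)‖
            ≤ ‖x p‖ ^ m * ‖x p‖ ^ (m+1) :=
              mul_le_mul (prod_abs_le x _ hBp _) (prod_abs_le x _ hBp _)
                (Finset.prod_nonneg fun _ _ => norm_nonneg _) (by positivity)
          _ = s := by rw [hs, ← pow_add]; congr 1; ring
      have hrsum : ∑ z ∈ ((Finset.univ ×ˢ Finset.univ).erase d).erase e,
          ‖A (Fin.cons p z.1) z.2‖ = rOffSub A p q := by
        rw [rOffSub, rOff_eq]
        have := Finset.add_sum_erase ((Finset.univ ×ˢ Finset.univ).erase d)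
          (fun z => ‖A (Fin.cons p z.1) z.2‖) hemem
        simp only [hedef] at this ⊢
        rw [← this]
        rw [aSlice]
        ring
      calc ‖aSlice A p q‖ * t + ∑ z ∈ ((Finset.univ ×ˢ Finset.univ).erase d).erase e,
            ‖A (Fin.cons p z.1) z.2‖ *
              ((∏ k, ‖x (z.1 k)‖) * ∏ k, ‖x (z.2 k)‖)
          ≤ ‖aSlice A p q‖ * t + ∑ z ∈ ((Finset.univ ×ˢ Finset.univ).erase d).erase e,
            ‖A (Fin.cons p z.1) z.2‖ * s := by linarith [hrest]
        _ = ‖aSlice A p q‖ * t + rOffSub A p q * s := by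
            rw [← Finset.sum_mul, hrsum]
    have hkey1 : ((diagEntry A p).re - c) * s ≤ ‖aSlice A p q‖ * t + rOffSub A p q * s :=
      le_trans h1 hsum_split
    -- bound at q
    have h2 := eigen_offdiag_bound A c x q (he q)
    have hsum_q : ∑ z ∈ (Finset.univ ×ˢ Finset.univ).erase
        ((fun _ => q : Fin m → Fin n), (fun _ => q : Fin (m+1) → Fin n)),
        ‖A (Fin.cons q z.1) z.2‖ *
          ((∏ k, ‖x (z.1 k)‖) * ∏ k, ‖x (z.2 k)‖)
        ≤ rOff A q * s := by
      rw [rOff_eq, Finset.sum_mul]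
      refine Finset.sum_le_sum fun z _ => ?_
      refine mul_le_mul_of_nonneg_left ?_ (norm_nonneg _)
      calc (∏ k, ‖x (z.1 k)‖) * ∏ k, ‖x (z.2 k)‖
          ≤ ‖x p‖ ^ m * ‖x p‖ ^ (m+1) :=
            mul_le_mul (prod_abs_le x _ hBp _) (prod_abs_le x _ hBp _)
              (Finset.prod_nonneg fun _ _ => norm_nonneg _) (by positivity)
        _ = s := by rw [hs, ← pow_add]; congr 1; ring
    have hkey2 : ((diagEntry A q).re - c) * t ≤ rOff A q * s := le_trans h2 hsum_q
    -- final arithmetic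
    have hslk := hsllk p q (fun hpq => hqp hpq.symm)
    have haS : 0 ≤ ‖aSlice A p q‖ := norm_nonneg _
    have hrq : 0 ≤ rOff A q := by
      rw [rOff_eq]
      exact Finset.sum_nonneg fun z _ => norm_nonneg _
    have hap := hdiag p
    have haq := hdiag q
    have hApos : 0 < (diagEntry A p).re - rOffSub A p q := by
      by_contra hcon
      push_neg at hcon
      nlinarith
    set a := (diagEntry A p).re
    set b := (diagEntry A q).re
    set R := rOffSub A p q
    set S := ‖aSlice A p q‖
    set r := rOff A q
    have e1 : (a - c - R) * s ≤ S * t := by linarith [hkey1]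
    have hbc : (0:ℝ) ≤ b - c := by linarith
    have e2 : ((b - c) * t) * S ≤ (r * s) * S := mul_le_mul_of_nonneg_right hkey2 haS
    have e3 : ((a - c - R) * s) * (b - c) ≤ (S * t) * (b - c) :=
      mul_le_mul_of_nonneg_right e1 hbc
    have e4 : ((a - c - R) * (b - c)) * s ≤ (r * S) * s := by nlinarith [e2, e3]
    have e5 : (a - c - R) * (b - c) ≤ r * S := le_of_mul_le_mul_right e4 hspos
    have e6 : (a - R) * b ≤ (a - c - R) * (b - c) := by nlinarith [hApos, haq, hc]
    linarith [hslk]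

lemma fpoly_zero {n m : ℕ} (A : (Fin (m+1) → Fin n) → (Fin (m+1) → Fin n) → ℂ) :
    fpoly A (0 : Fin n → ℂ) = 0 := by
  rw [fpoly]
  refine Finset.sum_eq_zero fun i _ => Finset.sum_eq_zero fun j _ => ?_
  rw [Finset.prod_eq_zero (Finset.mem_univ 0) (by simp)]
  ring

lemma fpoly_smul {n m : ℕ} (A : (Fin (m+1) → Fin n) → (Fin (m+1) → Fin n) → ℂ)
    (t : ℝ) (y : Fin n → ℂ) :
    fpoly A (t • y) = ((t:ℂ)) ^ (2*m+2) * fpoly A y := by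
  rw [fpoly, fpoly, Finset.mul_sum]
  refine Finset.sum_congr rfl fun i _ => ?_
  rw [Finset.mul_sum]
  refine Finset.sum_congr rfl fun j _ => ?_
  have h1 : ∏ k, (t • y) (i k) = (t:ℂ) ^ (m+1) * ∏ k, y (i k) := by
    have : ∀ k : Fin (m+1), (t • y) (i k) = (t:ℂ) * y (i k) := by
      intro k; simp [Complex.real_smul]
    rw [Finset.prod_congr rfl (fun k _ => this k), Finset.prod_mul_distrib,
      Finset.prod_const, Finset.card_univ, Fintype.card_fin]
  have h2 : ∏ k, (starRingEnd ℂ) ((t • y) (j k))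
      = (t:ℂ) ^ (m+1) * ∏ k, (starRingEnd ℂ) (y (j k)) := by
    have : ∀ k : Fin (m+1), (starRingEnd ℂ) ((t • y) (j k))
        = (t:ℂ) * (starRingEnd ℂ) (y (j k)) := by
      intro k; simp [Complex.real_smul, map_mul, Complex.conj_ofReal]
    rw [Finset.prod_congr rfl (fun k _ => this k), Finset.prod_mul_distrib,
      Finset.prod_const, Finset.card_univ, Fintype.card_fin]
  rw [h1, h2]
  rw [show (t:ℂ)^(2*m+2) = (t:ℂ)^(m+1) * (t:ℂ)^(m+1) by rw [← pow_add]; congr 1; ring]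
  ring

lemma normPow_smul {n M : ℕ} (t : ℝ) (ht : 0 ≤ t) (y : Fin n → ℂ) :
    normPow M (t • y) = t ^ M * normPow M y := by
  rw [normPow, normPow, Finset.mul_sum]
  refine Finset.sum_congr rfl fun p _ => ?_
  have : ‖(t • y) p‖ = t * ‖y p‖ := by
    simp [Complex.real_smul, map_mul, Complex.norm_real, _root_.abs_of_nonneg ht]
  rw [this, mul_pow]

lemma normPow_ofReal {n m : ℕ} (y : Fin n → ℂ) :
    ((normPow (2*m+2) y : ℝ) : ℂ) = ∑ p, (y p * (starRingEnd ℂ) (y p)) ^ (m+1) := by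
  rw [normPow]
  push_cast
  refine Finset.sum_congr rfl fun p _ => ?_
  rw [Complex.mul_conj]
  rw [show ((‖y p‖ : ℂ)) ^ (2*m+2) = (((‖y p‖ : ℂ)) ^ 2) ^ (m+1) by ring]
  congr 1
  norm_cast
  rw [Complex.sq_norm]

lemma continuous_fpoly {n M : ℕ} (A : (Fin M → Fin n) → (Fin M → Fin n) → ℂ) :
    Continuous (fun y : Fin n → ℂ => fpoly A y) := by
  unfold fpoly
  refine continuous_finset_sum _ fun i _ => continuous_finset_sum _ fun j _ => ?_
  refine Continuous.mul (Continuous.mul continuous_const ?_) ?_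
  · exact continuous_finset_prod _ fun k _ => continuous_apply (i k)
  · exact continuous_finset_prod _ fun k _ =>
      Complex.continuous_conj.comp (continuous_apply (j k))

lemma continuous_normPow {n M : ℕ} : Continuous (fun y : Fin n → ℂ => normPow M y) := by
  unfold normPow
  exact continuous_finset_sum _ fun p _ =>
    (continuous_norm.comp (continuous_apply p)).pow M

lemma exists_sphere_min {n m : ℕ} (hn : 0 < n)
    (A : (Fin (m+1) → Fin n) → (Fin (m+1) → Fin n) → ℂ) :
    ∃ x0 : Fin n → ℂ, normPow (2*m+2) x0 = 1 ∧
      ∀ y : Fin n → ℂ, normPow (2*m+2) y = 1 → (fpoly A x0).re ≤ (fpoly A y).re := by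
  classical
  set Sp : Set (Fin n → ℂ) := {y | normPow (2*m+2) y = 1} with hSp
  have hclosed : IsClosed Sp := isClosed_eq continuous_normPow continuous_const
  have hbdd : Bornology.IsBounded Sp := by
    refine (Metric.isBounded_iff_subset_closedBall 0).mpr ⟨1, fun y hy => ?_⟩
    simp only [Metric.mem_closedBall, dist_zero_right]
    rw [pi_norm_le_iff_of_nonneg zero_le_one]
    intro p
    have h1 : ‖y p‖ ^ (2*m+2) ≤ 1 := by
      have := Finset.single_le_sum (f := fun q => ‖y q‖ ^ (2*m+2))
        (fun q _ => by positivity) (Finset.mem_univ p)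
      rw [show ∑ q, ‖y q‖ ^ (2*m+2) = normPow (2*m+2) y from rfl, hy] at this
      exact this
    exact (pow_le_one_iff_of_nonneg (norm_nonneg _) (by omega)).mp h1
  have hcompact : IsCompact Sp := Metric.isCompact_of_isClosed_isBounded hclosed hbdd
  have hne : Sp.Nonempty := by
    refine ⟨fun p => if p = ⟨0, hn⟩ then 1 else 0, ?_⟩
    simp only [hSp, Set.mem_setOf_eq, normPow]
    rw [Finset.sum_eq_single ⟨0, hn⟩]
    · simp
    · intro q _ hq
      simp [hq]
    · simp
  obtain ⟨x0, hx0S, hmin⟩ := hcompact.exists_isMinOn hne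
    ((Complex.continuous_re.comp (continuous_fpoly A)).continuousOn)
  exact ⟨x0, hx0S, fun y hy => hmin hy⟩

lemma min_global {n m : ℕ} (A : (Fin (m+1) → Fin n) → (Fin (m+1) → Fin n) → ℂ)
    (x0 : Fin n → ℂ) (hx0 : normPow (2*m+2) x0 = 1)
    (hmin : ∀ y : Fin n → ℂ, normPow (2*m+2) y = 1 → (fpoly A x0).re ≤ (fpoly A y).re) :
    ∀ y : Fin n → ℂ, (fpoly A x0).re * normPow (2*m+2) y ≤ (fpoly A y).re := by
  intro y
  by_cases hy : y = 0
  · subst hy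
    rw [fpoly_zero]
    have : normPow (2*m+2) (0 : Fin n → ℂ) = 0 := by
      rw [normPow]
      refine Finset.sum_eq_zero fun p _ => ?_
      simp
    rw [this]
    simp
  · have hν : 0 < normPow (2*m+2) y := normPow_pos y hy
    set ν := normPow (2*m+2) y with hνdef
    set t : ℝ := ν ^ ((1:ℝ)/(2*m+2)) with htdef
    have htpos : 0 < t := Real.rpow_pos_of_pos hν _
    have htM : t ^ (2*m+2) = ν := by
      rw [htdef, ← Real.rpow_natCast (ν ^ ((1:ℝ)/(2*m+2))) (2*m+2), ← Real.rpow_mul (le_of_lt hν)]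
      push_cast
      rw [one_div_mul_cancel (by positivity), Real.rpow_one]
    have hz : normPow (2*m+2) (t⁻¹ • y) = 1 := by
      rw [normPow_smul _ (by positivity), inv_pow, htM]
      exact inv_mul_cancel₀ (ne_of_gt hν)
    have h1 := hmin _ hz
    rw [fpoly_smul] at h1
    have h2 : (((t⁻¹ : ℝ) : ℂ) ^ (2*m+2) * fpoly A y).re
        = (t⁻¹) ^ (2*m+2) * (fpoly A y).re := by
      rw [show (((t⁻¹:ℝ)) : ℂ) ^ (2*m+2) = (((t⁻¹ ^ (2*m+2) : ℝ)) : ℂ) by push_cast; ring]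
      exact Complex.re_ofReal_mul _ _
    rw [h2] at h1
    have h3 : t⁻¹ ^ (2*m+2) = ν⁻¹ := by
      rw [← htM]; rw [inv_pow]
    rw [h3] at h1
    calc (fpoly A x0).re * ν ≤ (ν⁻¹ * (fpoly A y).re) * ν := by
          exact mul_le_mul_of_nonneg_right h1 (le_of_lt hν)
      _ = (fpoly A y).re := by field_simp

section TestDeriv
open Complex Finset
variable {n m : ℕ}

lemma hasDerivAt_coord (x w : Fin n → ℂ) (a : Fin n) :
    HasDerivAt (fun s : ℝ => x a + (s:ℂ) * w a) (w a) 0 := by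
  have h0 : HasDerivAt (fun s : ℝ => (s:ℂ)) 1 0 := by
    simpa using (hasDerivAt_id (0:ℝ)).ofReal_comp
  simpa using (h0.mul_const (w a)).const_add (x a)

lemma hasDerivAt_coord_conj (x w : Fin n → ℂ) (a : Fin n) :
    HasDerivAt (fun s : ℝ => (starRingEnd ℂ) (x a + (s:ℂ) * w a)) ((starRingEnd ℂ) (w a)) 0 := by
  have heq : (fun s : ℝ => (starRingEnd ℂ) (x a + (s:ℂ) * w a))
      = fun s : ℝ => (starRingEnd ℂ) (x a) + (s:ℂ) * (starRingEnd ℂ) (w a) := by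
    funext s
    rw [map_add, map_mul, Complex.conj_ofReal]
  rw [heq]
  exact hasDerivAt_coord (fun a => (starRingEnd ℂ) (x a)) (fun a => (starRingEnd ℂ) (w a)) a

lemma hasDerivAt_prod1 (x w : Fin n → ℂ) (i : Fin (m+1) → Fin n) :
    HasDerivAt (fun s : ℝ => ∏ k, (x (i k) + (s:ℂ) * w (i k)))
      (∑ k, (∏ l ∈ Finset.univ.erase k, x (i l)) * w (i k)) 0 := by
  have h := HasDerivAt.fun_finsetProd (u := Finset.univ)
    (f := fun (k : Fin (m+1)) (s : ℝ) => x (i k) + (s:ℂ) * w (i k))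
    (f' := fun k => w (i k)) (fun k _ => hasDerivAt_coord x w (i k))
  simpa [smul_eq_mul] using h

lemma hasDerivAt_prod2 (x w : Fin n → ℂ) (j : Fin (m+1) → Fin n) :
    HasDerivAt (fun s : ℝ => ∏ k, (starRingEnd ℂ) (x (j k) + (s:ℂ) * w (j k)))
      (∑ k, (∏ l ∈ Finset.univ.erase k, (starRingEnd ℂ) (x (j l))) * (starRingEnd ℂ) (w (j k))) 0 := by
  have h := HasDerivAt.fun_finsetProd (u := Finset.univ)
    (f := fun (k : Fin (m+1)) (s : ℝ) => (starRingEnd ℂ) (x (j k) + (s:ℂ) * w (j k)))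
    (f' := fun k => (starRingEnd ℂ) (w (j k))) (fun k _ => hasDerivAt_coord_conj x w (j k))
  simpa [smul_eq_mul] using h

lemma hasDerivAt_fpoly_line (A : (Fin (m+1) → Fin n) → (Fin (m+1) → Fin n) → ℂ)
    (x w : Fin n → ℂ) :
    HasDerivAt (fun s : ℝ => fpoly A (fun a => x a + (s:ℂ) * w a))
      (∑ i : Fin (m+1) → Fin n, ∑ j : Fin (m+1) → Fin n,
        ((A i j * (∑ k, (∏ l ∈ Finset.univ.erase k, x (i l)) * w (i k)))
            * ∏ k, (starRingEnd ℂ) (x (j k))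
          + (A i j * ∏ k, x (i k))
            * (∑ k, (∏ l ∈ Finset.univ.erase k, (starRingEnd ℂ) (x (j l)))
                * (starRingEnd ℂ) (w (j k))))) 0 := by
  have h : HasDerivAt (fun s : ℝ => ∑ i : Fin (m+1) → Fin n, ∑ j : Fin (m+1) → Fin n,
      A i j * (∏ k, (x (i k) + (s:ℂ) * w (i k)))
        * ∏ k, (starRingEnd ℂ) (x (j k) + (s:ℂ) * w (j k)))
      (∑ i : Fin (m+1) → Fin n, ∑ j : Fin (m+1) → Fin n,
        ((A i j * (∑ k, (∏ l ∈ Finset.univ.erase k, x (i l)) * w (i k)))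
            * ∏ k, (starRingEnd ℂ) (x (j k))
          + (A i j * ∏ k, x (i k))
            * (∑ k, (∏ l ∈ Finset.univ.erase k, (starRingEnd ℂ) (x (j l)))
                * (starRingEnd ℂ) (w (j k))))) 0 := by
    refine HasDerivAt.fun_sum fun i _ => HasDerivAt.fun_sum fun j _ => ?_
    have h1 := ((hasDerivAt_prod1 x w i).const_mul (A i j)).fun_mul (hasDerivAt_prod2 x w j)
    simpa [mul_assoc] using h1
  have heq : (fun s : ℝ => fpoly A (fun a => x a + (s:ℂ) * w a))
      = fun s : ℝ => ∑ i : Fin (m+1) → Fin n, ∑ j : Fin (m+1) → Fin n,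
        A i j * (∏ k, (x (i k) + (s:ℂ) * w (i k)))
          * ∏ k, (starRingEnd ℂ) (x (j k) + (s:ℂ) * w (j k)) := by
    funext s
    rw [fpoly]
  rw [heq]
  exact h

lemma hasDerivAt_cpow {g : ℝ → ℂ} {g' : ℂ} {M : ℕ} (hg : HasDerivAt g g' 0) :
    HasDerivAt (fun s => g s ^ (M+1)) (((M+1:ℕ):ℂ) * g 0 ^ M * g') 0 := by
  have h := HasDerivAt.fun_finsetProd (u := (Finset.univ : Finset (Fin (M+1))))
    (f := fun (_ : Fin (M+1)) s => g s) (f' := fun _ => g') (fun _ _ => hg)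
  have h1 : (fun s : ℝ => ∏ _k : Fin (M+1), g s) = fun s => g s ^ (M+1) := by
    funext s
    rw [Finset.prod_const, Finset.card_univ, Fintype.card_fin]
  have h2 : ∑ k : Fin (M+1), (∏ _l ∈ Finset.univ.erase k, g 0) • g'
      = ((M+1:ℕ):ℂ) * g 0 ^ M * g' := by
    have : ∀ k : Fin (M+1), (∏ _l ∈ Finset.univ.erase k, g 0) • g' = g 0 ^ M * g' := by
      intro k
      rw [Finset.prod_const, Finset.card_erase_of_mem (Finset.mem_univ k), Finset.card_univ,
        Fintype.card_fin, smul_eq_mul]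
      rfl
    rw [Finset.sum_congr rfl (fun k _ => this k), Finset.sum_const, Finset.card_univ,
      Fintype.card_fin, nsmul_eq_mul]
    push_cast
    ring
  rw [h1, h2] at h
  exact h

lemma hasDerivAt_ntilde_line (x w : Fin n → ℂ) :
    HasDerivAt (fun s : ℝ => ∑ a, ((x a + (s:ℂ) * w a) * (starRingEnd ℂ) (x a + (s:ℂ) * w a)) ^ (m+1))
      (∑ a, ((m+1 : ℕ) : ℂ) * (x a * (starRingEnd ℂ) (x a)) ^ m
        * (w a * (starRingEnd ℂ) (x a) + x a * (starRingEnd ℂ) (w a))) 0 := by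
  refine HasDerivAt.fun_sum fun a _ => ?_
  have h := hasDerivAt_cpow (M := m) ((hasDerivAt_coord x w a).mul (hasDerivAt_coord_conj x w a))
  simpa using h


lemma prod_erase_zero {M : ℕ} (g : Fin (M+1) → ℂ) :
    ∏ l ∈ Finset.univ.erase 0, g l = ∏ l : Fin M, g l.succ := by
  rw [Fin.univ_succ, Finset.erase_cons, Finset.prod_map]
  rfl

lemma sum_precomp {N : ℕ} (σ : Equiv.Perm (Fin (m+1))) (F : (Fin (m+1) → Fin n) → ℂ) :
    ∑ i : Fin (m+1) → Fin n, F (i ∘ ⇑σ) = ∑ i : Fin (m+1) → Fin n, F i := by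
  exact Equiv.sum_comp ⟨fun f => f ∘ ⇑σ, fun f => f ∘ ⇑σ.symm,
    fun f => by funext l; simp, fun f => by funext l; simp⟩ F

set_option maxHeartbeats 1000000 in
/-- the combinatorial core: sum with one marked slot equal to `p` -/
lemma core_identity {n m : ℕ} (A : (Fin (m+1) → Fin n) → (Fin (m+1) → Fin n) → ℂ)
    (hcps : IsCPS A) (x : Fin n → ℂ) (p : Fin n) (j : Fin (m+1) → Fin n) :
    ∑ i : Fin (m+1) → Fin n, A i j *
        (∑ k ∈ Finset.univ.filter (fun k => i k = p), ∏ l ∈ Finset.univ.erase k, x (i l))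
      = ((m+1:ℕ):ℂ) * ∑ i' : Fin m → Fin n, A (Fin.cons p i') j * ∏ l, x (i' l) := by
  classical
  have step1 : ∀ i : Fin (m+1) → Fin n, A i j *
      (∑ k ∈ Finset.univ.filter (fun k => i k = p), ∏ l ∈ Finset.univ.erase k, x (i l))
      = ∑ k : Fin (m+1), (if i k = p then A i j * ∏ l ∈ Finset.univ.erase k, x (i l) else 0) := by
    intro i
    rw [Finset.sum_filter, Finset.mul_sum]
    refine Finset.sum_congr rfl fun k _ => ?_
    split <;> ring
  rw [Finset.sum_congr rfl (fun i _ => step1 i), Finset.sum_comm]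
  have step2 : ∀ k : Fin (m+1),
      (∑ i : Fin (m+1) → Fin n,
        (if i k = p then A i j * ∏ l ∈ Finset.univ.erase k, x (i l) else 0))
      = ∑ i' : Fin m → Fin n, A (Fin.cons p i') j * ∏ l, x (i' l) := by
    intro k
    have hswap : ∀ i : Fin (m+1) → Fin n,
        (if (i ∘ ⇑(Equiv.swap 0 k)) k = p then A (i ∘ ⇑(Equiv.swap 0 k)) j
          * ∏ l ∈ Finset.univ.erase k, x ((i ∘ ⇑(Equiv.swap 0 k)) l) else 0)
        = (if i 0 = p then A i j * ∏ l ∈ Finset.univ.erase 0, x (i l) else 0) := by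
      intro i
      have h1 : (i ∘ ⇑(Equiv.swap 0 k)) k = i 0 := by
        simp [Function.comp, Equiv.swap_apply_right]
      have h2 : A (i ∘ ⇑(Equiv.swap 0 k)) j = A i j := by
        have := hcps.2 i j (Equiv.swap 0 k) 1
        simpa using this
      have h3 : ∏ l ∈ Finset.univ.erase k, x ((i ∘ ⇑(Equiv.swap 0 k)) l)
          = ∏ l ∈ Finset.univ.erase 0, x (i l) := by
        refine Finset.prod_nbij' (fun l => Equiv.swap 0 k l) (fun l => Equiv.swap 0 k l)
          ?_ ?_ (fun a _ => Equiv.swap_apply_self _ _ _) (fun a _ => Equiv.swap_apply_self _ _ _)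
          (fun a _ => rfl)
        · intro a ha
          rw [Finset.mem_erase] at ha ⊢
          refine ⟨fun hcon0 => ha.1 ?_, Finset.mem_univ _⟩
          have hcon : Equiv.swap 0 k a = 0 := hcon0
          have hh : Equiv.swap 0 k (Equiv.swap 0 k a) = Equiv.swap 0 k 0 := congrArg _ hcon
          rw [Equiv.swap_apply_self, Equiv.swap_apply_left] at hh
          exact hh
        · intro a ha
          rw [Finset.mem_erase] at ha ⊢
          refine ⟨fun hcon0 => ha.1 ?_, Finset.mem_univ _⟩
          have hcon : Equiv.swap 0 k a = k := hcon0
          have hh : Equiv.swap 0 k (Equiv.swap 0 k a) = Equiv.swap 0 k k := congrArg _ hcon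
          rw [Equiv.swap_apply_self, Equiv.swap_apply_right] at hh
          exact hh
      rw [h1, h2, h3]
    calc (∑ i : Fin (m+1) → Fin n,
          (if i k = p then A i j * ∏ l ∈ Finset.univ.erase k, x (i l) else 0))
        = ∑ i : Fin (m+1) → Fin n,
          (if (i ∘ ⇑(Equiv.swap 0 k)) k = p then A (i ∘ ⇑(Equiv.swap 0 k)) j
            * ∏ l ∈ Finset.univ.erase k, x ((i ∘ ⇑(Equiv.swap 0 k)) l) else 0) :=
          (sum_precomp (N := n) (Equiv.swap 0 k) _).symm
      _ = ∑ i : Fin (m+1) → Fin n,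
          (if i 0 = p then A i j * ∏ l ∈ Finset.univ.erase 0, x (i l) else 0) :=
          Finset.sum_congr rfl (fun i _ => hswap i)
      _ = ∑ i ∈ Finset.univ.filter (fun i : Fin (m+1) → Fin n => i 0 = p),
            A i j * ∏ l ∈ Finset.univ.erase 0, x (i l) := (Finset.sum_filter _ _).symm
      _ = ∑ i' : Fin m → Fin n, A (Fin.cons p i') j
            * ∏ l ∈ Finset.univ.erase 0, x ((Fin.cons p i' : Fin (m+1) → Fin n) l) := by
          refine Finset.sum_nbij' (fun i => Fin.tail i) (fun i' => Fin.cons p i')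
            (fun a _ => Finset.mem_univ _) ?_ ?_ (fun a _ => Fin.tail_cons _ _) ?_
          · intro a _
            rw [Finset.mem_filter]
            exact ⟨Finset.mem_univ _, Fin.cons_zero _ _⟩
          · intro a ha
            rw [Finset.mem_filter] at ha
            rw [← ha.2]
            exact Fin.cons_self_tail a
          · intro a ha
            rw [Finset.mem_filter] at ha
            have hres : Fin.cons p (Fin.tail a) = a := by
              rw [← ha.2]; exact Fin.cons_self_tail a
            rw [hres]
      _ = ∑ i' : Fin m → Fin n, A (Fin.cons p i') j * ∏ l, x (i' l) := by
          refine Finset.sum_congr rfl fun i' _ => ?_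
          congr 1
          rw [prod_erase_zero]
          refine Finset.prod_congr rfl fun l _ => ?_
          rw [Fin.cons_succ]
  rw [Finset.sum_congr rfl (fun k _ => step2 k), Finset.sum_const, Finset.card_univ,
    Fintype.card_fin, nsmul_eq_mul]


set_option maxHeartbeats 2000000 in
lemma minimizer_eigen {n m : ℕ} (A : (Fin (m+1) → Fin n) → (Fin (m+1) → Fin n) → ℂ)
    (hcps : IsCPS A) (x : Fin n → ℂ) (lam : ℝ)
    (hlam : (fpoly A x).re = lam)
    (hx1 : normPow (2*m+2) x = 1)
    (hglob : ∀ y : Fin n → ℂ, lam * normPow (2*m+2) y ≤ (fpoly A y).re) (p : Fin n) :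
    Fop A x p = (lam:ℂ) * (starRingEnd ℂ) (x p) * ((‖x p‖ : ℂ)) ^ (2*m) := by
  classical
  set G : (Fin (m+1) → Fin n) → ℂ := fun i =>
    ∑ k ∈ Finset.univ.filter (fun k => i k = p), ∏ l ∈ Finset.univ.erase k, x (i l) with hG
  have hGconj : ∀ i, (starRingEnd ℂ) (G i)
      = ∑ k ∈ Finset.univ.filter (fun k => i k = p),
          ∏ l ∈ Finset.univ.erase k, (starRingEnd ℂ) (x (i l)) := by
    intro i
    rw [hG, map_sum]
    exact Finset.sum_congr rfl fun k _ => by rw [map_prod]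
  set PF : ℂ := ∑ i : Fin (m+1) → Fin n, ∑ j : Fin (m+1) → Fin n,
    A i j * G i * ∏ k, (starRingEnd ℂ) (x (j k)) with hPF
  set QF : ℂ := ∑ i : Fin (m+1) → Fin n, ∑ j : Fin (m+1) → Fin n,
    A i j * (∏ k, x (i k)) * (starRingEnd ℂ) (G j) with hQF
  set PN : ℂ := ((m+1:ℕ):ℂ) * (x p * (starRingEnd ℂ) (x p))^m * (starRingEnd ℂ) (x p) with hPN
  set P : ℂ := PF - (lam:ℂ) * PN with hP
  -- QF = conj PF
  have hQFc' : (starRingEnd ℂ) QF = PF := by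
    calc (starRingEnd ℂ) QF
        = ∑ i : Fin (m+1) → Fin n, ∑ j : Fin (m+1) → Fin n,
            A j i * (∏ k, (starRingEnd ℂ) (x (i k))) * G j := by
          rw [hQF, map_sum]
          refine Finset.sum_congr rfl fun i _ => ?_
          rw [map_sum]
          refine Finset.sum_congr rfl fun j _ => ?_
          rw [map_mul, map_mul, map_prod, hcps.1, Complex.conj_conj]
      _ = ∑ j : Fin (m+1) → Fin n, ∑ i : Fin (m+1) → Fin n,
            A j i * (∏ k, (starRingEnd ℂ) (x (i k))) * G j := Finset.sum_comm
      _ = PF := by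
          rw [hPF]
          exact Finset.sum_congr rfl fun i _ => Finset.sum_congr rfl fun j _ => by ring
  have hQFc : QF = (starRingEnd ℂ) PF := by
    rw [← hQFc', Complex.conj_conj]
  have main : ∀ u : ℂ, (u * P + (starRingEnd ℂ) (u * P)).re = 0 := by
    intro u
    set w : Fin n → ℂ := fun a => if a = p then u else 0 with hw
    have hF := hasDerivAt_fpoly_line A x w
    have hN := hasDerivAt_ntilde_line (m := m) x w
    have hΦ := hF.sub (hN.const_mul ((lam:ℝ):ℂ))
    set D : ℂ := (∑ i : Fin (m+1) → Fin n, ∑ j : Fin (m+1) → Fin n,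
        ((A i j * (∑ k, (∏ l ∈ Finset.univ.erase k, x (i l)) * w (i k)))
            * ∏ k, (starRingEnd ℂ) (x (j k))
          + (A i j * ∏ k, x (i k))
            * (∑ k, (∏ l ∈ Finset.univ.erase k, (starRingEnd ℂ) (x (j l)))
                * (starRingEnd ℂ) (w (j k)))))
      - ((lam:ℝ):ℂ) * (∑ a, ((m+1 : ℕ) : ℂ) * (x a * (starRingEnd ℂ) (x a)) ^ m
        * (w a * (starRingEnd ℂ) (x a) + x a * (starRingEnd ℂ) (w a))) with hD
    -- the local-min argument
    set φ : ℝ → ℝ := fun s =>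
      (fpoly A (fun a => x a + (s:ℂ) * w a)).re
        - lam * normPow (2*m+2) (fun a => x a + (s:ℂ) * w a) with hφ
    have hNid : ∀ s : ℝ, (∑ a, ((x a + (s:ℂ) * w a) * (starRingEnd ℂ) (x a + (s:ℂ) * w a)) ^ (m+1))
        = ((normPow (2*m+2) (fun a => x a + (s:ℂ) * w a) : ℝ) : ℂ) := by
      intro s
      rw [normPow_ofReal]
    have hφd : HasDerivAt φ D.re 0 := by
      have hre := Complex.reCLM.hasFDerivAt.comp_hasDerivAt (0:ℝ) hΦ
      have heq : (⇑Complex.reCLM ∘ fun s : ℝ =>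
          fpoly A (fun a => x a + (s:ℂ) * w a)
            - ((lam:ℝ):ℂ) * ∑ a, ((x a + (s:ℂ) * w a) * (starRingEnd ℂ) (x a + (s:ℂ) * w a)) ^ (m+1)) = φ := by
        funext s
        simp only [Function.comp_apply, Complex.reCLM_apply, Complex.sub_re, hφ]
        rw [hNid s, Complex.re_ofReal_mul, Complex.ofReal_re]
      rw [← heq]
      exact hre
    have hφ0 : φ 0 = 0 := by
      have hx0 : (fun a => x a + ((0:ℝ):ℂ) * w a) = x := by
        funext a; simp
      simp only [hφ]
      rw [hx0, hx1, hlam]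
      ring
    have hφnn : ∀ s, 0 ≤ φ s := by
      intro s
      have := hglob (fun a => x a + (s:ℂ) * w a)
      simp only [hφ]
      linarith
    have hlocmin : IsLocalMin φ 0 := by
      refine Filter.Eventually.of_forall fun s => ?_
      rw [hφ0]
      exact hφnn s
    have hder0 : D.re = 0 := by
      rw [← hφd.deriv]
      exact hlocmin.deriv_eq_zero
    -- identify D
    have hw1 : ∀ i : Fin (m+1) → Fin n,
        (∑ k, (∏ l ∈ Finset.univ.erase k, x (i l)) * w (i k)) = u * G i := by
      intro i
      rw [hG, Finset.mul_sum, Finset.sum_filter]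
      refine Finset.sum_congr rfl fun k _ => ?_
      simp only [hw]
      by_cases h : i k = p
      · rw [if_pos h, if_pos h]; ring
      · rw [if_neg h, if_neg h]; ring
    have hw2 : ∀ j : Fin (m+1) → Fin n,
        (∑ k, (∏ l ∈ Finset.univ.erase k, (starRingEnd ℂ) (x (j l)))
          * (starRingEnd ℂ) (w (j k))) = (starRingEnd ℂ) u * (starRingEnd ℂ) (G j) := by
      intro j
      rw [hGconj, Finset.mul_sum, Finset.sum_filter]
      refine Finset.sum_congr rfl fun k _ => ?_
      simp only [hw]
      by_cases h : j k = p
      · rw [if_pos h, if_pos h]; ring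
      · rw [if_neg h, if_neg h, map_zero]; ring
    have hNsum : (∑ a, ((m+1 : ℕ) : ℂ) * (x a * (starRingEnd ℂ) (x a)) ^ m
        * (w a * (starRingEnd ℂ) (x a) + x a * (starRingEnd ℂ) (w a)))
        = u * PN + (starRingEnd ℂ) u * ((m+1:ℕ):ℂ) * (x p * (starRingEnd ℂ) (x p))^m * x p := by
      rw [Finset.sum_eq_single p]
      · simp only [hw, if_pos rfl, hPN]
        ring
      · intro a _ ha
        simp only [hw, if_neg ha]
        simp
      · intro h
        exact absurd (Finset.mem_univ p) h
    have e1 : (∑ i : Fin (m+1) → Fin n, ∑ j : Fin (m+1) → Fin n,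
        (A i j * (u * G i)) * ∏ k, (starRingEnd ℂ) (x (j k))) = u * PF := by
      rw [hPF]
      conv_rhs => rw [Finset.mul_sum]
      refine Finset.sum_congr rfl fun i _ => ?_
      conv_rhs => rw [Finset.mul_sum]
      exact Finset.sum_congr rfl fun j _ => by ring
    have e2 : (∑ i : Fin (m+1) → Fin n, ∑ j : Fin (m+1) → Fin n,
        (A i j * ∏ k, x (i k)) * ((starRingEnd ℂ) u * (starRingEnd ℂ) (G j)))
        = (starRingEnd ℂ) u * QF := by
      rw [hQF]
      conv_rhs => rw [Finset.mul_sum]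
      refine Finset.sum_congr rfl fun i _ => ?_
      conv_rhs => rw [Finset.mul_sum]
      exact Finset.sum_congr rfl fun j _ => by ring
    have hDsum : (∑ i : Fin (m+1) → Fin n, ∑ j : Fin (m+1) → Fin n,
        ((A i j * (∑ k, (∏ l ∈ Finset.univ.erase k, x (i l)) * w (i k)))
            * ∏ k, (starRingEnd ℂ) (x (j k))
          + (A i j * ∏ k, x (i k))
            * (∑ k, (∏ l ∈ Finset.univ.erase k, (starRingEnd ℂ) (x (j l)))
                * (starRingEnd ℂ) (w (j k)))))
        = u * PF + (starRingEnd ℂ) u * QF := by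
      calc (∑ i : Fin (m+1) → Fin n, ∑ j : Fin (m+1) → Fin n,
          ((A i j * (∑ k, (∏ l ∈ Finset.univ.erase k, x (i l)) * w (i k)))
              * ∏ k, (starRingEnd ℂ) (x (j k))
            + (A i j * ∏ k, x (i k))
              * (∑ k, (∏ l ∈ Finset.univ.erase k, (starRingEnd ℂ) (x (j l)))
                  * (starRingEnd ℂ) (w (j k)))))
          = ∑ i : Fin (m+1) → Fin n, ∑ j : Fin (m+1) → Fin n,
            ((A i j * (u * G i)) * ∏ k, (starRingEnd ℂ) (x (j k))
              + (A i j * ∏ k, x (i k)) * ((starRingEnd ℂ) u * (starRingEnd ℂ) (G j))) := by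
            refine Finset.sum_congr rfl fun i _ => Finset.sum_congr rfl fun j _ => ?_
            rw [hw1 i, hw2 j]
        _ = (∑ i : Fin (m+1) → Fin n, ∑ j : Fin (m+1) → Fin n,
              (A i j * (u * G i)) * ∏ k, (starRingEnd ℂ) (x (j k)))
            + ∑ i : Fin (m+1) → Fin n, ∑ j : Fin (m+1) → Fin n,
              (A i j * ∏ k, x (i k)) * ((starRingEnd ℂ) u * (starRingEnd ℂ) (G j)) := by
            rw [← Finset.sum_add_distrib]
            exact Finset.sum_congr rfl fun i _ => Finset.sum_add_distrib
        _ = u * PF + (starRingEnd ℂ) u * QF := by rw [e1, e2]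
    have hDval : D = u * P + (starRingEnd ℂ) (u * P) := by
      rw [hD, hDsum, hNsum, hQFc, hP]
      simp only [map_sub, map_mul, Complex.conj_ofReal, Complex.conj_conj, hPN, map_pow,
        map_natCast]
      ring
    rw [← hDval, hder0]
  -- P = 0
  have hPre : P.re = 0 := by
    have h1 := main 1
    simp only [one_mul, Complex.add_re, Complex.conj_re] at h1
    linarith
  have hPim : P.im = 0 := by
    have h2 := main Complex.I
    simp only [Complex.add_re, Complex.conj_re, Complex.mul_re, Complex.I_re, Complex.I_im] at h2
    linarith
  have hP0 : P = 0 := Complex.ext hPre hPim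
  have hPFeq : PF = (lam:ℂ) * PN := by
    have h := hP0
    rw [hP] at h
    exact sub_eq_zero.mp h
  have hPFcore : PF = ((m+1:ℕ):ℂ) * Fop A x p := by
    rw [hPF, Finset.sum_comm]
    calc ∑ j : Fin (m+1) → Fin n, ∑ i : Fin (m+1) → Fin n,
          A i j * G i * ∏ k, (starRingEnd ℂ) (x (j k))
        = ∑ j : Fin (m+1) → Fin n, (∑ i : Fin (m+1) → Fin n, A i j * G i)
            * ∏ k, (starRingEnd ℂ) (x (j k)) := by
          refine Finset.sum_congr rfl fun j _ => ?_
          rw [Finset.sum_mul]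
      _ = ∑ j : Fin (m+1) → Fin n, (((m+1:ℕ):ℂ)
            * ∑ i' : Fin m → Fin n, A (Fin.cons p i') j * ∏ l, x (i' l))
            * ∏ k, (starRingEnd ℂ) (x (j k)) := by
          refine Finset.sum_congr rfl fun j _ => ?_
          rw [core_identity A hcps x p j]
      _ = ((m+1:ℕ):ℂ) * ∑ j : Fin (m+1) → Fin n, ∑ i' : Fin m → Fin n,
            (A (Fin.cons p i') j * ∏ l, x (i' l)) * ∏ k, (starRingEnd ℂ) (x (j k)) := by
          conv_rhs => rw [Finset.mul_sum]
          refine Finset.sum_congr rfl fun j _ => ?_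
          conv_rhs => rw [Finset.mul_sum]
          rw [mul_assoc, Finset.sum_mul, Finset.mul_sum]
      _ = ((m+1:ℕ):ℂ) * Fop A x p := by
          rw [Fop, Finset.sum_comm]
  have hm1 : ((m+1:ℕ):ℂ) ≠ 0 := Nat.cast_ne_zero.mpr (Nat.succ_ne_zero m)
  have habs : (x p * (starRingEnd ℂ) (x p))^m = ((‖x p‖ : ℂ))^(2*m) := by
    rw [Complex.mul_conj, ← Complex.sq_norm]
    push_cast
    ring
  apply mul_left_cancel₀ hm1
  rw [← hPFcore, hPFeq, hPN, habs]
  ring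

end TestDeriv

theorem strict_llk_cps_eigenvalues_positive {n m : ℕ}
    (A : (Fin (m+1) → Fin n) → (Fin (m+1) → Fin n) → ℂ)
    (hcps : IsCPS A)
    (hdiag : ∀ p : Fin n, 0 < (diagEntry A p).re)
    (hsllk : ∀ p q : Fin n, p ≠ q →
      rOff A q * ‖aSlice A p q‖
        < ((diagEntry A p).re - rOffSub A p q) * (diagEntry A q).re) :
    (∀ (lam : ℂ) (x : Fin n → ℂ), IsHhatEigenpair A lam x → lam.im = 0 ∧ 0 < lam.re) ∧
    HermitianPD A := by
  have heigpos : ∀ (lam : ℂ) (x : Fin n → ℂ), IsHhatEigenpair A lam x →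
      lam.im = 0 ∧ 0 < lam.re := by
    intro lam x h
    have him := eigen_im_zero A hcps.1 lam x h
    refine ⟨him, ?_⟩
    by_contra hre
    have hlam : lam = ((lam.re : ℝ) : ℂ) := by
      apply Complex.ext
      · simp
      · simp [him]
    rw [hlam] at h
    exact no_nonpos_eigen A hdiag hsllk lam.re x h (not_lt.mp hre)
  refine ⟨heigpos, ?_⟩
  intro y hy
  have hn : 0 < n := by
    by_contra hn0
    push_neg at hn0
    apply hy
    funext i
    exact absurd i.isLt (by omega)
  obtain ⟨x0, hx01, hmin⟩ := exists_sphere_min hn A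
  have hglob := min_global A x0 hx01 hmin
  set lam : ℝ := (fpoly A x0).re with hlamdef
  have hx0ne : x0 ≠ 0 := by
    intro h0
    rw [h0] at hx01
    have hz : normPow (2*m+2) (0 : Fin n → ℂ) = 0 := by
      rw [normPow]
      refine Finset.sum_eq_zero fun p _ => ?_
      simp
    rw [hz] at hx01
    exact absurd hx01 (by norm_num)
  have heig : IsHhatEigenpair A ((lam:ℝ):ℂ) x0 :=
    ⟨hx0ne, fun p => minimizer_eigen A hcps x0 lam rfl hx01 hglob p⟩
  have hpos := heigpos _ _ heig
  have hlampos : 0 < lam := by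
    have := hpos.2
    simpa using this
  have him := fpoly_im_zero A hcps.1 y
  refine ⟨(fpoly A y).re, ?_, ?_⟩
  · apply Complex.ext
    · simp
    · simp [him]
  · have h1 := hglob y
    have h2 : 0 < normPow (2*m+2) y := normPow_pos y hy
    nlinarith
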